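/- arXiv:2512.22282 — 5 statements merged into one kernel-verified Lean document; each statement's English description precedes it below -/
import Mathlib

section
/- If a nonnegative matrix Φ has rank 2, then its nonnegative rank (the smallest K such that Φ = MH with M, H nonnegative of sizes I×K and K×J) is also 2. -/
open Matrix

/-- The nonnegative rank of a nonnegative I×J real matrix: the smallest K such that
Φ = M * H with M an I×K nonnegative matrix and H a K×J nonnegative matrix. -/
noncomputable def nonnegRank {I J : ℕ} (Φ : Matrix (Fin I) (Fin J) ℝ) : ℕ :=
  sInf {K : ℕ | ∃ (M : Matrix (Fin I) (Fin K) ℝ) (H : Matrix (Fin K) (Fin J) ℝ),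
    (∀ i k, 0 ≤ M i k) ∧ (∀ k j, 0 ≤ H k j) ∧ Φ = M * H}

/-- If a nonnegative matrix Φ is nonzero and has rank 2, then its nonnegative rank is also 2. -/
theorem nonnegRank_eq_two_of_rank_eq_two {I J : ℕ}
    (Φ : Matrix (Fin I) (Fin J) ℝ)
    (hΦ : ∀ i j, 0 ≤ Φ i j) (hne : Φ ≠ 0) (hrank : Φ.rank = 2) :
    nonnegRank Φ = 2 := by
  classical
  set c : Fin J → (Fin I → ℝ) := fun j i => Φ i j with hc
  -- the span of the columns has finrank 2
  have hspan : Module.finrank ℝ (Submodule.span ℝ (Set.range c)) = 2 := by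
    have h := Φ.rank_eq_finrank_span_cols
    rw [hrank] at h
    have hrg : Set.range Φ.col = Set.range c := rfl
    rw [hrg] at h
    exact h.symm
  -- extract a linearly independent spanning subset of the columns
  obtain ⟨bs, hbsub, hbspan, hbind⟩ := exists_linearIndependent ℝ (Set.range c)
  have hbfin : bs.Finite := (Set.finite_range c).subset hbsub
  have hbfin' : Fintype bs := hbfin.fintype
  have hbcard : bs.toFinset.card = 2 := by
    have := finrank_span_set_eq_card hbind
    rw [hbspan, hspan] at this
    exact this.symm
  obtain ⟨v1, v2, hv12, hbs2⟩ := Finset.card_eq_two.mp hbcard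
  have hbset : bs = {v1, v2} := by
    rw [← Set.coe_toFinset bs, hbs2]; simp
  have hv1 : v1 ∈ bs := by rw [hbset]; left; rfl
  have hv2 : v2 ∈ bs := by rw [hbset]; right; rfl
  obtain ⟨p, hp⟩ := hbsub hv1
  obtain ⟨q, hq⟩ := hbsub hv2
  have hpq : p ≠ q := fun h => hv12 (by rw [← hp, ← hq, h])
  have hcpne : c p ≠ 0 := by
    rw [hp]; exact hbind.ne_zero ⟨v1, hv1⟩
  have hcqne : c q ≠ 0 := by
    rw [hq]; exact hbind.ne_zero ⟨v2, hv2⟩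
  -- every column is in the span of columns p and q
  have hmem : ∀ j, c j ∈ Submodule.span ℝ ({c p, c q} : Set (Fin I → ℝ)) := by
    intro j
    have : c j ∈ Submodule.span ℝ (Set.range c) := Submodule.subset_span ⟨j, rfl⟩
    rw [← hbspan, hbset] at this
    rw [hp, hq]
    exact this
  have hrep0 : ∀ j, ∃ m n : ℝ, m • c p + n • c q = c j := by
    intro j; exact Submodule.mem_span_pair.mp (hmem j)
  choose f g hfg using hrep0
  set α : Fin J → ℝ := fun j => if j = p then 1 else if j = q then 0 else f j with hα
  set β : Fin J → ℝ := fun j => if j = p then 0 else if j = q then 1 else g j with hβ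
  have hrep : ∀ j, c j = α j • c p + β j • c q := by
    intro j
    by_cases hjp : j = p
    · subst hjp; simp [hα, hβ]
    · by_cases hjq : j = q
      · subst hjq; simp [hα, hβ, hjp]
      · simp only [hα, hβ, if_neg hjp, if_neg hjq]
        exact (hfg j).symm
  -- column sums
  set s : Fin J → ℝ := fun j => ∑ i, Φ i j with hsdef
  have hs0 : ∀ j, 0 ≤ s j := fun j => Finset.sum_nonneg fun i _ => hΦ i j
  have hszero : ∀ j, s j = 0 → c j = 0 := by
    intro j hj
    funext i
    have := (Finset.sum_eq_zero_iff_of_nonneg (fun i _ => hΦ i j)).mp hj i (Finset.mem_univ i)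
    simpa [hc] using this
  have hsne : ∀ j, c j ≠ 0 → 0 < s j := by
    intro j hj
    rcases lt_or_eq_of_le (hs0 j) with h | h
    · exact h
    · exact absurd (hszero j h.symm) hj
  have hsp : 0 < s p := hsne p hcpne
  have hsq : 0 < s q := hsne q hcqne
  have hsum : ∀ j, s j = α j * s p + β j * s q := by
    intro j
    have h := hrep j
    have : ∀ i, Φ i j = α j * Φ i p + β j * Φ i q := by
      intro i
      have := congrFun h i
      simpa [hc, smul_eq_mul] using this
    simp only [hsdef]
    rw [Finset.sum_congr rfl fun i _ => this i, Finset.sum_add_distrib,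
      ← Finset.mul_sum, ← Finset.mul_sum]
  -- the parameter t
  set t : Fin J → ℝ := fun j => β j * s q / s j with ht
  have htp : t p = 0 := by simp [ht, hβ]
  have htq : t q = 1 := by
    have hβq : β q = 1 := by simp [hβ, Ne.symm hpq]
    simp only [ht, hβq, one_mul]
    exact div_self hsq.ne'
  set T : Finset (Fin J) := Finset.univ.filter (fun j => s j ≠ 0) with hT
  have hpT : p ∈ T := by simp [hT, hsp.ne']
  have hqT : q ∈ T := by simp [hT, hsq.ne']
  obtain ⟨a, haT, hamin⟩ := T.exists_min_image t ⟨p, hpT⟩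
  obtain ⟨b, hbT, hbmax⟩ := T.exists_max_image t ⟨p, hpT⟩
  have hsaT : ∀ j ∈ T, 0 < s j := by
    intro j hj
    have : s j ≠ 0 := by simpa [hT] using hj
    exact lt_of_le_of_ne (hs0 j) (Ne.symm this)
  have hsa : 0 < s a := hsaT a haT
  have hsb : 0 < s b := hsaT b hbT
  have hta : t a ≤ 0 := htp ▸ hamin p hpT
  have htb : 1 ≤ t b := htq ▸ hbmax q hqT
  have hab : t a < t b := lt_of_le_of_lt hta (lt_of_lt_of_le one_pos htb)
  have hd : (0:ℝ) < t b - t a := sub_pos.mpr hab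
  -- scalar representations
  have hβeq : ∀ k, s k ≠ 0 → β k = t k * s k / s q := by
    intro k hk
    simp only [ht]
    field_simp
  have hαeq : ∀ k, s k ≠ 0 → α k = s k * (1 - t k) / s p := by
    intro k hk
    have h1 := hsum k
    have h2 : β k * s q = t k * s k := by
      simp only [ht]; field_simp
    rw [eq_div_iff hsp.ne']
    linear_combination -h1 - h2
  -- the coefficients
  set x : Fin J → ℝ := fun j => s j * (t b - t j) / (s a * (t b - t a)) with hx
  set y : Fin J → ℝ := fun j => s j * (t j - t a) / (s b * (t b - t a)) with hy
  have hxnn : ∀ j ∈ T, 0 ≤ x j := by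
    intro j hj
    apply div_nonneg
    · exact mul_nonneg (hs0 j) (sub_nonneg.mpr (hbmax j hj))
    · exact le_of_lt (mul_pos hsa hd)
  have hynn : ∀ j ∈ T, 0 ≤ y j := by
    intro j hj
    apply div_nonneg
    · exact mul_nonneg (hs0 j) (sub_nonneg.mpr (hamin j hj))
    · exact le_of_lt (mul_pos hsb hd)
  -- the coefficient identities
  have hcoeff : ∀ j ∈ T, α j = x j * α a + y j * α b ∧ β j = x j * β a + y j * β b := by
    intro j hj
    have hsj : s j ≠ 0 := by simpa [hT] using hj
    constructor
    · rw [hαeq j hsj, hαeq a hsa.ne', hαeq b hsb.ne', hx, hy]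
      field_simp
      ring
    · rw [hβeq j hsj, hβeq a hsa.ne', hβeq b hsb.ne', hx, hy]
      field_simp
      ring
  -- columns identity
  have hcol : ∀ j ∈ T, ∀ i, Φ i j = x j * Φ i a + y j * Φ i b := by
    intro j hj i
    have e : ∀ k i, Φ i k = α k * Φ i p + β k * Φ i q := by
      intro k i
      have := congrFun (hrep k) i
      simpa [hc, smul_eq_mul] using this
    obtain ⟨h1, h2⟩ := hcoeff j hj
    rw [e j i, e a i, e b i, h1, h2]
    ring
  -- the factorization
  set M : Matrix (Fin I) (Fin 2) ℝ := fun i k => if k = 0 then Φ i a else Φ i b with hM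
  set H : Matrix (Fin 2) (Fin J) ℝ :=
    fun k j => if s j = 0 then 0 else if k = 0 then x j else y j with hH
  have hfact : Φ = M * H := by
    ext i j
    rw [Matrix.mul_apply, Fin.sum_univ_two]
    by_cases hsj : s j = 0
    · have : Φ i j = 0 := by
        have := congrFun (hszero j hsj) i
        simpa [hc] using this
      simp [hM, hH, hsj, this]
    · have hjT : j ∈ T := by simp [hT, hsj]
      simp only [hM, hH, if_neg hsj, if_pos rfl]
      rw [hcol j hjT i]
      norm_num
      ring
  have h2mem : (2:ℕ) ∈ {K : ℕ | ∃ (M : Matrix (Fin I) (Fin K) ℝ) (H : Matrix (Fin K) (Fin J) ℝ),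
      (∀ i k, 0 ≤ M i k) ∧ (∀ k j, 0 ≤ H k j) ∧ Φ = M * H} := by
    refine ⟨M, H, ?_, ?_, hfact⟩
    · intro i k
      simp only [hM]
      split <;> [exact hΦ i a; exact hΦ i b]
    · intro k j
      simp only [hH]
      by_cases hsj : s j = 0
      · simp [hsj]
      · have hjT : j ∈ T := by simp [hT, hsj]
        simp only [if_neg hsj]
        split
        · exact hxnn j hjT
        · exact hynn j hjT
  have hlow : ∀ K ∈ {K : ℕ | ∃ (M : Matrix (Fin I) (Fin K) ℝ) (H : Matrix (Fin K) (Fin J) ℝ),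
      (∀ i k, 0 ≤ M i k) ∧ (∀ k j, 0 ≤ H k j) ∧ Φ = M * H}, 2 ≤ K := by
    rintro K ⟨M', H', -, -, hMH⟩
    have h1 : Φ.rank ≤ K := by
      rw [hMH]
      exact (Matrix.rank_mul_le_left M' H').trans (Matrix.rank_le_width M')
    rwa [hrank] at h1
  rw [nonnegRank]
  refine le_antisymm (Nat.sInf_le h2mem) ?_
  exact hlow _ (Nat.sInf_mem ⟨2, h2mem⟩)
end

section
/- Every row-stochastic factorization (LBA/EMA/PLSA) of a row-stochastic matrix Π gives rise to a three-factor LCA factorization: if Π = WG with W, G nonnegative and row sums all equal to 1, and D is a diagonal matrix with positive diagonal whose diagonal entries sum appropriately so that Ψ = DΠ has total entry sum 1, then Ψ = AΘB where A = DW·diag(1ᵀDW)⁻¹ has columns summing to 1, Θ = diag(1ᵀDW) is diagonal with total sum 1, and B = G has rows summing to 1, with all three matrices nonnegative. -/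
/-- Every row-stochastic factorization Π = W·G of a row-stochastic matrix, together with a
positive diagonal scaling D (with trace 1), gives rise to a three-factor LCA factorization
Ψ = A·Θ·B with A column-stochastic, Θ diagonal nonnegative with total sum 1, and B
row-stochastic. -/
theorem lba_to_lca {I J K : ℕ}
    (Pi : Matrix (Fin I) (Fin J) ℝ)
    (W : Matrix (Fin I) (Fin K) ℝ) (G : Matrix (Fin K) (Fin J) ℝ)
    (hPi_nonneg : ∀ i j, 0 ≤ Pi i j) (hPi_rows : ∀ i, ∑ j, Pi i j = 1)
    (hW_nonneg : ∀ i k, 0 ≤ W i k) (hW_rows : ∀ i, ∑ k, W i k = 1)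
    (hG_nonneg : ∀ k j, 0 ≤ G k j) (hG_rows : ∀ k, ∑ j, G k j = 1)
    (hfact : Pi = W * G)
    (d : Fin I → ℝ) (hd_pos : ∀ i, 0 < d i) (hd_sum : ∑ i, d i = 1)
    (hcol_pos : ∀ k, 0 < ∑ i, (Matrix.diagonal d * W) i k) :
    -- the column sums of D·W
    let c : Fin K → ℝ := fun k => ∑ i, (Matrix.diagonal d * W) i k
    let A : Matrix (Fin I) (Fin K) ℝ := fun i k => (Matrix.diagonal d * W) i k / c k
    let Θ : Matrix (Fin K) (Fin K) ℝ := Matrix.diagonal c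
    let B : Matrix (Fin K) (Fin J) ℝ := G
    let Ψ : Matrix (Fin I) (Fin J) ℝ := Matrix.diagonal d * Pi
    (∑ i, ∑ j, Ψ i j = 1) ∧
    Ψ = A * Θ * B ∧
    (∀ i k, 0 ≤ A i k) ∧ (∀ k, ∑ i, A i k = 1) ∧
    (∀ k, 0 ≤ c k) ∧ (∑ k, c k = 1) ∧
    (∀ k j, 0 ≤ B k j) ∧ (∀ k, ∑ j, B k j = 1) := by
  intro c A Θ B Ψ
  have hDW : ∀ i k, (Matrix.diagonal d * W) i k = d i * W i k := by
    intro i k; simp [Matrix.mul_apply, Matrix.diagonal]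
  have hc_pos : ∀ k, 0 < c k := hcol_pos
  have hAΘ : A * Θ = Matrix.diagonal d * W := by
    ext i k
    simp only [A, Θ, Matrix.mul_diagonal]
    field_simp
    exact (Matrix.mul_diagonal ..).trans (div_mul_cancel₀ _ (hc_pos k).ne')
  refine ⟨?_, ?_, ?_, ?_, ?_, ?_, ?_, ?_⟩
  · have : ∀ i j, Ψ i j = d i * Pi i j := by
      intro i j; simp [Ψ, Matrix.mul_apply, Matrix.diagonal]
    simp only [this, ← Finset.mul_sum, hPi_rows, mul_one, hd_sum]
  · rw [hAΘ, Matrix.mul_assoc]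
    simp only [Ψ, B, hfact]
  · intro i k
    exact div_nonneg (by rw [hDW]; exact mul_nonneg (hd_pos i).le (hW_nonneg i k))
      (hc_pos k).le
  · intro k
    rw [← Finset.sum_div]
    exact div_self (hc_pos k).ne'
  · intro k; exact (hc_pos k).le
  · simp only [c, hDW]
    rw [Finset.sum_comm]
    simp only [← Finset.mul_sum, hW_rows, mul_one, hd_sum]
  · exact hG_nonneg
  · exact hG_rows
end

section
/- Every three-factor LCA factorization of a matrix Ψ with overall sum 1 yields a row-stochastic two-factor (LBA) factorization of the row-normalized matrix: if Ψ = AΘB with A nonnegative with column sums 1, Θ diagonal nonnegative with total sum 1, B nonnegative with row sums 1, and all row sums of Ψ are positive, then Π = D_Ψ⁻¹Ψ factors as Π = WG where W = D_Ψ⁻¹AΘ is nonnegative with row sums 1 and G = B is nonnegative with row sums 1, where D_Ψ is the diagonal matrix of row sums of Ψ. -/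
/-- Every three-factor LCA factorization Ψ = A·Θ·B of a matrix Ψ with total sum 1 and
positive row sums yields a row-stochastic two-factor (LBA) factorization of the
row-normalized matrix Π = D_Ψ⁻¹·Ψ, namely Π = W·G with W = D_Ψ⁻¹·A·Θ and G = B. -/
theorem lca_to_lba {I J K : ℕ}
    (Ψ : Matrix (Fin I) (Fin J) ℝ)
    (A : Matrix (Fin I) (Fin K) ℝ) (θ : Fin K → ℝ) (B : Matrix (Fin K) (Fin J) ℝ)
    (hΨ_nonneg : ∀ i j, 0 ≤ Ψ i j)
    (hΨ_total : ∑ i, ∑ j, Ψ i j = 1)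
    (hΨ_rows_pos : ∀ i, 0 < ∑ j, Ψ i j)
    (hA_nonneg : ∀ i k, 0 ≤ A i k) (hA_cols : ∀ k, ∑ i, A i k = 1)
    (hθ_nonneg : ∀ k, 0 ≤ θ k) (hθ_sum : ∑ k, θ k = 1)
    (hB_nonneg : ∀ k j, 0 ≤ B k j) (hB_rows : ∀ k, ∑ j, B k j = 1)
    (hfact : Ψ = A * Matrix.diagonal θ * B) :
    let DΨinv : Matrix (Fin I) (Fin I) ℝ := Matrix.diagonal fun i => (∑ j, Ψ i j)⁻¹
    let Pi : Matrix (Fin I) (Fin J) ℝ := DΨinv * Ψ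
    let W : Matrix (Fin I) (Fin K) ℝ := DΨinv * A * Matrix.diagonal θ
    let G : Matrix (Fin K) (Fin J) ℝ := B
    Pi = W * G ∧
    (∀ i k, 0 ≤ W i k) ∧ (∀ i, ∑ k, W i k = 1) ∧
    (∀ k j, 0 ≤ G k j) ∧ (∀ k, ∑ j, G k j = 1) := by
  intro DΨinv Pi W G
  have hrow : ∀ i, ∑ j, Ψ i j = ∑ k, A i k * θ k := by
    intro i
    rw [hfact]
    simp only [Matrix.mul_apply, Matrix.diagonal_apply, mul_ite, mul_zero,
      Finset.sum_ite_eq, Finset.sum_ite_eq', Finset.mem_univ, if_true]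
    rw [Finset.sum_comm]
    refine Finset.sum_congr rfl fun k _ => ?_
    rw [← Finset.mul_sum, hB_rows k, mul_one]
  have hW : ∀ i k, W i k = (∑ j, Ψ i j)⁻¹ * A i k * θ k := by
    intro i k
    show (DΨinv * A * Matrix.diagonal θ) i k = _
    simp only [DΨinv, Matrix.mul_apply, Matrix.diagonal_apply, mul_ite, mul_zero,
      ite_mul, zero_mul, Finset.sum_ite_eq, Finset.sum_ite_eq', Finset.mem_univ, if_true]
  refine ⟨?_, ?_, ?_, fun k j => hB_nonneg k j, hB_rows⟩
  · show DΨinv * Ψ = DΨinv * A * Matrix.diagonal θ * B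
    rw [hfact]
    simp only [Matrix.mul_assoc]
  · intro i k
    rw [hW]
    exact mul_nonneg (mul_nonneg (inv_nonneg.2 (hΨ_rows_pos i).le) (hA_nonneg i k)) (hθ_nonneg k)
  · intro i
    calc ∑ k, W i k = (∑ j, Ψ i j)⁻¹ * ∑ k, A i k * θ k := by
          simp only [hW]; rw [Finset.mul_sum]; exact Finset.sum_congr rfl fun k _ => by ring
      _ = 1 := by rw [← hrow i, inv_mul_cancel₀ (hΨ_rows_pos i).ne']
end

section
/- If T is a K×K matrix that is simultaneously row-stochastic (nonnegative entries, each row sums to 1) and its inverse T⁻¹ is also row-stochastic, then T is a permutation matrix. -/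
/-- `P` is a permutation matrix. -/
def IsPermMatrix {K : ℕ} (P : Matrix (Fin K) (Fin K) ℝ) : Prop :=
  ∃ σ : Equiv.Perm (Fin K), ∀ i j, P i j = if σ i = j then 1 else 0

/-- A K×K matrix that is row-stochastic and whose inverse is also row-stochastic
is a permutation matrix. -/
theorem perm_of_doubly_rowStochastic_inverse {K : ℕ}
    (T T' : Matrix (Fin K) (Fin K) ℝ)
    (hTT' : T * T' = 1) (hT'T : T' * T = 1)
    (hT_nonneg : ∀ i j, 0 ≤ T i j) (hT_rows : ∀ i, ∑ j, T i j = 1)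
    (hT'_nonneg : ∀ i j, 0 ≤ T' i j) (hT'_rows : ∀ i, ∑ j, T' i j = 1) :
    IsPermMatrix T := by
  have key : ∀ (A B : Matrix (Fin K) (Fin K) ℝ), A * B = 1 →
      (∀ i j, 0 ≤ A i j) → (∀ i j, 0 ≤ B i j) →
      ∀ i j k, i ≠ k → A i j * B j k = 0 := by
    intro A B hAB hA hB i j k hik
    have h0 : ∑ l, A i l * B l k = 0 := by
      have h := congrFun (congrFun hAB i) k
      rw [Matrix.mul_apply] at h
      rw [h]
      simp [Matrix.one_apply, hik]
    exact (Finset.sum_eq_zero_iff_of_nonneg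
      (fun l _ => mul_nonneg (hA i l) (hB l k))).mp h0 j (Finset.mem_univ j)
  have exj : ∀ i, ∃ j, T i j = 1 ∧ ∀ l, l ≠ j → T i l = 0 := by
    intro i
    obtain ⟨j, hj⟩ : ∃ j, 0 < T i j := by
      by_contra h
      push_neg at h
      have hz : ∀ j, T i j = 0 := fun j => le_antisymm (h j) (hT_nonneg i j)
      have := hT_rows i
      simp [hz] at this
    have hT'row : ∀ l, l ≠ i → T' j l = 0 := by
      intro l hl
      have h := key T T' hTT' hT_nonneg hT'_nonneg i j l (fun e => hl (e.symm ▸ rfl))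
      rcases mul_eq_zero.mp h with h | h
      · exact absurd h (ne_of_gt hj)
      · exact h
    have hT'ji : 0 < T' j i := by
      have hs : ∑ l, T' j l = T' j i := Finset.sum_eq_single i
        (fun l _ hl => hT'row l hl) (by simp)
      rw [hT'_rows j] at hs
      rw [← hs]; exact one_pos
    have hTrow : ∀ l, l ≠ j → T i l = 0 := by
      intro l hl
      have h := key T' T hT'T hT'_nonneg hT_nonneg j i l (Ne.symm hl)
      rcases mul_eq_zero.mp h with h | h
      · exact absurd h (ne_of_gt hT'ji)
      · exact h
    have hTij : T i j = 1 := by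
      have hs : ∑ l, T i l = T i j := Finset.sum_eq_single j
        (fun l _ hl => hTrow l hl) (by simp)
      rw [hT_rows i] at hs
      exact hs.symm
    exact ⟨j, hTij, hTrow⟩
  choose f hf1 hf0 using exj
  have hrow : ∀ i m, (T * T') i m = T' (f i) m := by
    intro i m
    rw [Matrix.mul_apply]
    rw [Finset.sum_eq_single (f i) (fun l _ hl => by rw [hf0 i l hl, zero_mul])
      (by simp)]
    rw [hf1 i, one_mul]
  have hinj : Function.Injective f := by
    intro i1 i2 hEq
    by_contra hne
    have h1 : T' (f i1) i2 = 0 := by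
      rw [← hrow i1 i2, hTT', Matrix.one_apply_ne hne]
    have h2 : T' (f i2) i2 = 1 := by
      rw [← hrow i2 i2, hTT', Matrix.one_apply]
      simp
    rw [hEq, h2] at h1
    exact one_ne_zero h1
  refine ⟨Equiv.ofBijective f (Finite.injective_iff_bijective.mp hinj), fun i j => ?_⟩
  rw [Equiv.ofBijective_apply]
  by_cases h : f i = j
  · rw [if_pos h, ← h, hf1 i]
  · rw [if_neg h]
    exact hf0 i j (fun e => h e.symm)
end

section
/- For K = 2, if the coefficient matrix W in a rank-2 row-stochastic factorization Π = WG contains a permuted 2×2 identity submatrix (separability), then the factorization is unique up to permutation: any other factorization Π = W̃G̃ with W̃, G̃ nonnegative row-stochastic and rank(G̃) = 2, where W̃ also contains a permuted 2×2 identity submatrix, satisfies G̃ = ΓG and W̃ = WΓ⁻¹ for some 2×2 permutation matrix Γ. -/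
/-- For K = 2: if both row-stochastic rank-2 factorizations Π = W·G = W̃·G̃ have separable
coefficient matrices (each contains the rows (1,0) and (0,1)), then they coincide up to a
permutation: G̃ = Γ·G and W = W̃·Γ for some 2×2 permutation matrix Γ. -/
theorem lba_unique_K2_separable {I J : ℕ}
    (Pi : Matrix (Fin I) (Fin J) ℝ)
    (W W' : Matrix (Fin I) (Fin 2) ℝ) (G G' : Matrix (Fin 2) (Fin J) ℝ)
    (hPi_nonneg : ∀ i j, 0 ≤ Pi i j) (hPi_rows : ∀ i, ∑ j, Pi i j = 1)
    (hPi_rank : Pi.rank = 2)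
    (hW_nonneg : ∀ i k, 0 ≤ W i k) (hW_rows : ∀ i, ∑ k, W i k = 1)
    (hG_nonneg : ∀ k j, 0 ≤ G k j) (hG_rows : ∀ k, ∑ j, G k j = 1)
    (hG_rank : G.rank = 2)
    (hfact : Pi = W * G)
    (hW_sep : ∃ i₁ i₂ : Fin I, W i₁ 0 = 1 ∧ W i₁ 1 = 0 ∧ W i₂ 0 = 0 ∧ W i₂ 1 = 1)
    (hW'_nonneg : ∀ i k, 0 ≤ W' i k) (hW'_rows : ∀ i, ∑ k, W' i k = 1)
    (hG'_nonneg : ∀ k j, 0 ≤ G' k j) (hG'_rows : ∀ k, ∑ j, G' k j = 1)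
    (hG'_rank : G'.rank = 2)
    (hfact' : Pi = W' * G')
    (hW'_sep : ∃ i₁ i₂ : Fin I, W' i₁ 0 = 1 ∧ W' i₁ 1 = 0 ∧ W' i₂ 0 = 0 ∧ W' i₂ 1 = 1) :
    ∃ Γ : Matrix (Fin 2) (Fin 2) ℝ, IsPermMatrix Γ ∧ G' = Γ * G ∧ W = W' * Γ := by
  obtain ⟨i₁, i₂, hA1, hA2, hA3, hA4⟩ := hW_sep
  obtain ⟨i₁', i₂', hB1, hB2, hB3, hB4⟩ := hW'_sep
  -- rows of G are linearly independent, via surjectivity of mulVec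
  have hsurj : Function.Surjective G.mulVec := by
    have hrk : G.rank = Module.finrank ℝ (LinearMap.range G.mulVecLin) := rfl
    have hrange : LinearMap.range G.mulVecLin = ⊤ := by
      apply Submodule.eq_top_of_finrank_eq
      rw [← hrk, hG_rank]; simp
    intro y
    obtain ⟨u, hu⟩ := LinearMap.range_eq_top.mp hrange y
    exact ⟨u, by rw [← Matrix.mulVecLin_apply]; exact hu⟩
  have indep : ∀ c₀ c₁ : ℝ, (∀ j, c₀ * G 0 j + c₁ * G 1 j = 0) → c₀ = 0 ∧ c₁ = 0 := by
    intro c₀ c₁ h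
    have key : ∀ y : Fin 2 → ℝ, c₀ * y 0 + c₁ * y 1 = 0 → True := fun _ _ => trivial
    have main : ∀ u : Fin J → ℝ, c₀ * G.mulVec u 0 + c₁ * G.mulVec u 1 = 0 := by
      intro u
      have : c₀ * G.mulVec u 0 + c₁ * G.mulVec u 1
          = ∑ j, (c₀ * G 0 j + c₁ * G 1 j) * u j := by
        simp only [Matrix.mulVec, dotProduct]
        rw [Finset.mul_sum, Finset.mul_sum, ← Finset.sum_add_distrib]
        exact Finset.sum_congr rfl fun j _ => by ring
      rw [this]
      simp only [h, zero_mul, Finset.sum_const_zero]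
    constructor
    · obtain ⟨u, hu⟩ := hsurj (_root_.Pi.single 0 1)
      have := main u
      rw [hu] at this
      simpa using this
    · obtain ⟨u, hu⟩ := hsurj (_root_.Pi.single 1 1)
      have := main u
      rw [hu] at this
      simpa using this
  -- entrywise expansions
  have hPiW : ∀ i j, Pi i j = W i 0 * G 0 j + W i 1 * G 1 j := by
    intro i j; rw [hfact]; simp [Matrix.mul_apply, Fin.sum_univ_two]
  have hPiW' : ∀ i j, Pi i j = W' i 0 * G' 0 j + W' i 1 * G' 1 j := by
    intro i j; rw [hfact']; simp [Matrix.mul_apply, Fin.sum_univ_two]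
  -- abbreviations
  set a := W i₁' 0 with ha_def
  set b := W i₂' 0 with hb_def
  set c := W' i₁ 0 with hc_def
  set d := W' i₂ 0 with hd_def
  have ha1 : W i₁' 1 = 1 - a := by
    have := hW_rows i₁'; rw [Fin.sum_univ_two] at this; linarith
  have hb1 : W i₂' 1 = 1 - b := by
    have := hW_rows i₂'; rw [Fin.sum_univ_two] at this; linarith
  have hc1 : W' i₁ 1 = 1 - c := by
    have := hW'_rows i₁; rw [Fin.sum_univ_two] at this; linarith
  have hd1 : W' i₂ 1 = 1 - d := by
    have := hW'_rows i₂; rw [Fin.sum_univ_two] at this; linarith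
  have ha0 : 0 ≤ a := hW_nonneg i₁' 0
  have haU : a ≤ 1 := by have := hW_nonneg i₁' 1; rw [ha1] at this; linarith
  have hb0 : 0 ≤ b := hW_nonneg i₂' 0
  have hbU : b ≤ 1 := by have := hW_nonneg i₂' 1; rw [hb1] at this; linarith
  have hc0 : 0 ≤ c := hW'_nonneg i₁ 0
  have hcU : c ≤ 1 := by have := hW'_nonneg i₁ 1; rw [hc1] at this; linarith
  have hd0 : 0 ≤ d := hW'_nonneg i₂ 0
  have hdU : d ≤ 1 := by have := hW'_nonneg i₂ 1; rw [hd1] at this; linarith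
  -- rows of G' as convex combinations of rows of G, and conversely
  have e0 : ∀ j, G' 0 j = a * G 0 j + (1 - a) * G 1 j := by
    intro j
    have h1 := hPiW i₁' j
    have h2 := hPiW' i₁' j
    rw [hB1, hB2] at h2
    rw [ha1] at h1
    linarith
  have e1 : ∀ j, G' 1 j = b * G 0 j + (1 - b) * G 1 j := by
    intro j
    have h1 := hPiW i₂' j
    have h2 := hPiW' i₂' j
    rw [hB3, hB4] at h2
    rw [hb1] at h1
    linarith
  have f0 : ∀ j, G 0 j = c * G' 0 j + (1 - c) * G' 1 j := by
    intro j
    have h1 := hPiW i₁ j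
    have h2 := hPiW' i₁ j
    rw [hA1, hA2] at h1
    rw [hc1] at h2
    linarith
  have f1 : ∀ j, G 1 j = d * G' 0 j + (1 - d) * G' 1 j := by
    intro j
    have h1 := hPiW i₂ j
    have h2 := hPiW' i₂ j
    rw [hA3, hA4] at h1
    rw [hd1] at h2
    linarith
  -- the composed 2×2 matrix equals the identity
  have key0 := indep (c * a + (1 - c) * b - 1) (c * (1 - a) + (1 - c) * (1 - b)) (fun j => by
    linear_combination (-1 : ℝ) * (f0 j) - c * (e0 j) - (1 - c) * (e1 j))
  have key1 := indep (d * a + (1 - d) * b) (d * (1 - a) + (1 - d) * (1 - b) - 1) (fun j => by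
    linear_combination (-1 : ℝ) * (f1 j) - d * (e0 j) - (1 - d) * (e1 j))
  have p2 : c * (1 - a) = 0 ∧ (1 - c) * (1 - b) = 0 := by
    have t1 : 0 ≤ c * (1 - a) := mul_nonneg hc0 (by linarith)
    have t2 : 0 ≤ (1 - c) * (1 - b) := mul_nonneg (by linarith) (by linarith)
    constructor <;> linarith [key0.2]
  have p3 : d * a = 0 ∧ (1 - d) * b = 0 := by
    have t1 : 0 ≤ d * a := mul_nonneg hd0 ha0
    have t2 : 0 ≤ (1 - d) * b := mul_nonneg (by linarith) hb0
    constructor <;> linarith [key1.1]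
  have hcase : (a = 1 ∧ b = 0) ∨ (a = 0 ∧ b = 1) := by
    rcases mul_eq_zero.mp p2.1 with hc' | ha'
    · -- c = 0 : then b = 1, d = 1, a = 0
      have hb' : b = 1 := by
        have := p2.2; rw [hc'] at this; ring_nf at this; linarith
      have hd' : d = 1 := by
        have := p3.2; rw [hb'] at this; ring_nf at this; linarith
      have ha' : a = 0 := by
        have := p3.1; rw [hd'] at this; linarith
      exact Or.inr ⟨ha', hb'⟩
    · -- a = 1 : then d = 0, b = 0
      have ha'' : a = 1 := by linarith
      have hd' : d = 0 := by
        have := p3.1; rw [ha''] at this; linarith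
      have hb' : b = 0 := by
        have := p3.2; rw [hd'] at this; linarith
      exact Or.inl ⟨ha'', hb'⟩
  rcases hcase with ⟨haa, hbb⟩ | ⟨haa, hbb⟩
  · -- identity permutation
    refine ⟨1, ⟨Equiv.refl _, fun i j => by simp [Matrix.one_apply]; split_ifs with h <;> simp [h]⟩, ?_, ?_⟩
    · rw [Matrix.one_mul]
      ext k j
      fin_cases k
      · show G' 0 j = G 0 j
        have := e0 j; rw [haa] at this; linarith
      · show G' 1 j = G 1 j
        have := e1 j; rw [hbb] at this; linarith
    · rw [Matrix.mul_one]
      ext i k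
      have hW' := indep (W i 0 - W' i 0) (W i 1 - W' i 1) (fun j => by
        have h1 := hPiW i j
        have h2 := hPiW' i j
        have g0 := e0 j; rw [haa] at g0
        have g1 := e1 j; rw [hbb] at g1
        linear_combination h2 - h1 + W' i 0 * g0 + W' i 1 * g1)
      fin_cases k
      · show W i 0 = W' i 0
        linarith [hW'.1]
      · show W i 1 = W' i 1
        linarith [hW'.2]
  · -- swap permutation
    refine ⟨!![0, 1; 1, 0], ⟨Equiv.swap 0 1, fun i j => by
        fin_cases i <;> fin_cases j <;> norm_num [Equiv.swap_apply_def]⟩, ?_, ?_⟩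
    · ext k j
      fin_cases k
      · have := e0 j; rw [haa] at this
        simp [Matrix.mul_apply, Fin.sum_univ_two]
        linarith
      · have := e1 j; rw [hbb] at this
        simp [Matrix.mul_apply, Fin.sum_univ_two]
        linarith
    · ext i k
      have hW' := indep (W i 0 - W' i 1) (W i 1 - W' i 0) (fun j => by
        have h1 := hPiW i j
        have h2 := hPiW' i j
        have g0 := e0 j; rw [haa] at g0
        have g1 := e1 j; rw [hbb] at g1
        linear_combination h2 - h1 + W' i 0 * g0 + W' i 1 * g1)
      fin_cases k
      · simp [Matrix.mul_apply, Fin.sum_univ_two]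
        linarith [hW'.1]
      · simp [Matrix.mul_apply, Fin.sum_univ_two]
        linarith [hW'.2]
end
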